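/- To give a category enriched over the skew monoidal category kMod^Q (the warping of k-Mod by the comonad Q) is equivalently to give: a set of objects, k-modules 𝒜(A,B), identity elements id_A ∈ 𝒜(A,A), and composition functions (g, f₀,…,fₙ) ↦ g^{(n)}(f₀,…,fₙ) : 𝒜(B,C) × 𝒜(A,B)^{n+1} → 𝒜(A,C) for each n ≥ 0, such that: (i) each is k-linear in g and symmetric k-linear in f₁,…,fₙ; (ii) g^{(0)}(id_A) = g; (iii) id^{(0)}(f) = f, id^{(1)}(f₀,f₁) = f₁, id^{(n)} = 0 for n ≥ 2; (iv) (h^{(m)}(g₀,…,g_m))^{(n)}(f⃗) = Σ_{[n]=A₁|…|A_k, θ:[m]≃[k]} h^{(|θ|)}(g_{θ₍₁₎}^{(A_{θ₍₂₎})}(f⃗)). -/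

import Mathlib

universe u

open Finset TensorProduct

/-- Unordered partitions of `Fin n` into nonempty parts, as a `Finset`. -/
def partitions (n : ℕ) : Finset (Finset (Finset (Fin n))) :=
  Finset.univ.filter fun P =>
    (∅ ∉ P) ∧ ∀ i : Fin n, (P.filter fun s => i ∈ s).card = 1

/-- Partial injections from `Fin m` to `Fin n` (partial isomorphisms `[m] ≃ [n]`). -/
def partialInjs (m n : ℕ) : Finset (Fin m → Option (Fin n)) :=
  Finset.univ.filter fun θ =>
    ∀ i j : Fin m, ∀ a : Fin n, θ i = some a → θ j = some a → i = j

/-- The arrangement (Notation 5) associated to a partial isomorphism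
`θ : [m] ≃ [n]`: the tail of the list of index pairs `x_{θ₍₁₎θ₍₂₎}`, i.e.
everything after the leading entry `(0,0)`: matched pairs `(i, θ i)`, then
unmatched rows `(i, 0)`, then unmatched columns `(0, j)`. -/
def arrangeTail (m n : ℕ) (θ : Fin m → Option (Fin n)) :
    List (Fin (m + 1) × Fin (n + 1)) :=
  ((List.finRange m).filterMap fun i => (θ i).map fun j => (i.succ, j.succ))
    ++ ((List.finRange m).filterMap fun i =>
          if θ i = none then some (i.succ, (0 : Fin (n + 1))) else none)
    ++ ((List.finRange n).filterMap fun j =>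
          if ∀ i, θ i ≠ some j then some ((0 : Fin (m + 1)), j.succ) else none)

variable (k : Type u) [CommSemiring k]

/-- The data of the comonad `Q A = ⊕_{x ∈ A} Sym(A)` on `k`-modules, presented
by its generators `⟨x₀, x₁, …, xₙ⟩` (symmetric multilinear in `x₁,…,xₙ`, but
not in `x₀`): a family of `k`-modules `Q M` together with the generator
functions. -/
structure QPre : Type (u + 1) where
  Q : ∀ (M : Type u) [AddCommMonoid M] [Module k M], Type u
  addQ : ∀ (M : Type u) [AddCommMonoid M] [Module k M], AddCommMonoid (Q M)
  modQ : ∀ (M : Type u) [AddCommMonoid M] [Module k M],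
    @Module k (Q M) inferInstance (addQ M)
  gen : ∀ (M : Type u) [AddCommMonoid M] [Module k M],
    M → (n : ℕ) → (Fin n → M) → Q M

variable {k}

instance (S : QPre k) (M : Type u) [AddCommMonoid M] [Module k M] :
    AddCommMonoid (S.Q M) := S.addQ M

instance (S : QPre k) (M : Type u) [AddCommMonoid M] [Module k M] :
    Module k (S.Q M) := S.modQ M

namespace QPre

/-- The generators `⟨x₀,…,xₙ⟩` are symmetric and multilinear in `x₁,…,xₙ`, and
`Q M` is universal among targets of such symmetric multilinear families: every
family `s x n v`, symmetric multilinear in `v`, factors uniquely through a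
`k`-linear map on `Q M`.  (This characterises `Q M = ⊕_{x ∈ M} Sym M`.) -/
def Lawful (S : QPre k) : Prop :=
  (∀ (M : Type u) [AddCommMonoid M] [Module k M] (x : M) (n : ℕ)
      (v : Fin n → M) (σ : Equiv.Perm (Fin n)),
      S.gen M x n (v ∘ σ) = S.gen M x n v) ∧
  (∀ (M : Type u) [AddCommMonoid M] [Module k M] (x : M) (n : ℕ)
      (v : Fin n → M) (i : Fin n) (a b : M),
      S.gen M x n (Function.update v i (a + b)) =
        S.gen M x n (Function.update v i a) +
          S.gen M x n (Function.update v i b)) ∧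
  (∀ (M : Type u) [AddCommMonoid M] [Module k M] (x : M) (n : ℕ)
      (v : Fin n → M) (i : Fin n) (r : k) (a : M),
      S.gen M x n (Function.update v i (r • a)) =
        r • S.gen M x n (Function.update v i a)) ∧
  (∀ (M : Type u) [AddCommMonoid M] [Module k M]
      (N : Type u) [AddCommMonoid N] [Module k N]
      (s : M → (n : ℕ) → (Fin n → M) → N),
      (∀ x n (v : Fin n → M) (σ : Equiv.Perm (Fin n)), s x n (v ∘ σ) = s x n v) →
      (∀ x n (v : Fin n → M) (i : Fin n) (a b : M),
        s x n (Function.update v i (a + b)) =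
          s x n (Function.update v i a) + s x n (Function.update v i b)) →
      (∀ x n (v : Fin n → M) (i : Fin n) (r : k) (a : M),
        s x n (Function.update v i (r • a)) =
          r • s x n (Function.update v i a)) →
      ∃! φ : S.Q M →ₗ[k] N, ∀ x n v, φ (S.gen M x n v) = s x n v)

/-- `⟨x_I⟩ = ⟨x₀, x_{i₁}, …, x_{i_k}⟩` for `I = {i₁ < … < i_k} ⊆ [n]`. -/
def genPart (S : QPre k) {M : Type u} [AddCommMonoid M] [Module k M]
    (x : M) {n : ℕ} (v : Fin n → M) (s : Finset (Fin n)) : S.Q M :=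
  S.gen M x s.card fun i => v ((s.orderIsoOfFin rfl i : Fin n))

end QPre


section

variable {k : Type u} [CommSemiring k] (S : QPre k) {Obj : Type u}
  (Hom : Obj → Obj → Type u) [∀ A B, AddCommMonoid (Hom A B)]
  [∀ A B, Module k (Hom A B)]
  (m : ∀ A B C : Obj, (Hom B C ⊗[k] S.Q (Hom A B)) →ₗ[k] Hom A C)

/-- The operation `g⁽ⁿ⁾(f₀,…,fₙ) := m(g ⊗ ⟨f₀,…,fₙ⟩)` induced by the enriched
composition maps `m`. -/
noncomputable def opOf {A B C : Obj} (g : Hom B C) (n : ℕ) (f : Fin (n + 1) → Hom A B) :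
    Hom A C :=
  m A B C (g ⊗ₜ[k] S.gen (Hom A B) (f 0) n fun i => f i.succ)

/-- `g^{(I)}(f⃗)` for `I ⊆ [n]`. -/
noncomputable def opIdx {A B C : Obj} (g : Hom B C) {n : ℕ} (f : Fin (n + 1) → Hom A B)
    (s : Finset (Fin n)) : Hom A C :=
  opOf S Hom m g s.card
    (Fin.cases (f 0) fun t => f (Fin.succ ((s.orderIsoOfFin rfl t : Fin n))))

end

section AuxLemmas

theorem finCasesSelf {n : ℕ} {M : Type u} (f : Fin (n + 1) → M) :
    (Fin.cases (f 0) (fun i => f i.succ) : ∀ _ : Fin (n + 1), M) = f := by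
  funext i; induction i using Fin.cases <;> rfl

theorem QPre.homExt {k : Type u} [CommSemiring k] (S : QPre k) (hS : S.Lawful)
    {M N : Type u} [AddCommMonoid M] [Module k M] [AddCommMonoid N] [Module k N]
    (φ ψ : S.Q M →ₗ[k] N)
    (h : ∀ x n (v : Fin n → M), φ (S.gen M x n v) = ψ (S.gen M x n v)) :
    φ = ψ := by
  obtain ⟨hsym, hadd, hsmul, huniv⟩ := hS
  obtain ⟨φ', -, huniq⟩ := huniv M N (fun x n v => ψ (S.gen M x n v))
    (fun x n v σ => congrArg ψ (hsym M x n v σ))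
    (fun x n v i a b => by rw [hadd, map_add])
    (fun x n v i r a => by rw [hsmul, map_smul])
  rw [huniq φ h, huniq ψ (fun x n v => rfl)]

end AuxLemmas

/-!
STATEMENT 18: To give a category enriched over the skew monoidal category
`kMod^Q` (the warping of `k`-Mod by the comonad `Q`) is equivalently to give:
a set of objects, `k`-modules `𝒜(A,B)`, identity elements `id_A ∈ 𝒜(A,A)`,
and composition functions `(g,f₀,…,fₙ) ↦ g⁽ⁿ⁾(f₀,…,fₙ)` satisfying axioms
(i)–(iv).  Since the composition of such an enriched category is a family of
`k`-linear maps `m : 𝒜(B,C) ⊗ Q𝒜(A,B) → 𝒜(A,C)`, and `g⁽ⁿ⁾(f₀,…,fₙ) :=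
m(g ⊗ ⟨f₀,…,fₙ⟩)` (so that axiom (i) — `k`-linearity in `g` and symmetric
`k`-multilinearity in `f₁,…,fₙ` — holds automatically), this says precisely:
the three skew-enriched category axioms for `(m, id)` hold iff the operations
`g⁽ⁿ⁾` satisfy (ii) `g⁽⁰⁾(id) = g`; (iii) `id⁽⁰⁾(f) = f`, `id⁽¹⁾(f₀,f₁) = f₁`,
`id⁽ⁿ⁾ = 0` for `n ≥ 2`; and (iv) the generalized Faà di Bruno associativity
formula.
-/
set_option maxHeartbeats 2000000 in
theorem statement18 {k : Type u} [CommSemiring k] (S : QPre k)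
    (hS : S.Lawful)
    (Qmap : ∀ {M N : Type u} [AddCommMonoid M] [Module k M] [AddCommMonoid N]
      [Module k N], (M →ₗ[k] N) → (S.Q M →ₗ[k] S.Q N))
    (hQmap : ∀ (M N : Type u) [AddCommMonoid M] [Module k M] [AddCommMonoid N]
      [Module k N] (f : M →ₗ[k] N) (x : M) (n : ℕ) (v : Fin n → M),
      Qmap f (S.gen M x n v) = S.gen N (f x) n (fun i => f (v i)))
    (εQ : ∀ (M : Type u) [AddCommMonoid M] [Module k M], S.Q M →ₗ[k] M)
    (hε0 : ∀ (M : Type u) [AddCommMonoid M] [Module k M] (x : M)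
      (v : Fin 0 → M), εQ M (S.gen M x 0 v) = x)
    (hε1 : ∀ (M : Type u) [AddCommMonoid M] [Module k M] (x : M)
      (v : Fin 1 → M), εQ M (S.gen M x 1 v) = v 0)
    (hε2 : ∀ (M : Type u) [AddCommMonoid M] [Module k M] (x : M) (n : ℕ)
      (v : Fin (n + 2) → M), εQ M (S.gen M x (n + 2) v) = 0)
    (δQ : ∀ (M : Type u) [AddCommMonoid M] [Module k M],
      S.Q M →ₗ[k] S.Q (S.Q M))
    (hδ : ∀ (M : Type u) [AddCommMonoid M] [Module k M] (x : M) (n : ℕ)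
      (v : Fin n → M),
      δQ M (S.gen M x n v) =
        ∑ P ∈ partitions n,
          S.gen (S.Q M) (S.genPart x v ∅) P.toList.length
            (fun j => S.genPart x v (P.toList.get j)))
    (mT : ∀ (M : Type u) [AddCommMonoid M] [Module k M]
      (N : Type u) [AddCommMonoid N] [Module k N],
      (S.Q M ⊗[k] S.Q N) →ₗ[k] S.Q (M ⊗[k] N))
    (hmT : ∀ (M : Type u) [AddCommMonoid M] [Module k M]
      (N : Type u) [AddCommMonoid N] [Module k N]
      (x : M) (m' : ℕ) (v : Fin m' → M) (y : N) (n : ℕ) (w : Fin n → N),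
      mT M N (S.gen M x m' v ⊗ₜ[k] S.gen N y n w) =
        ∑ θ ∈ partialInjs m' n,
          S.gen (M ⊗[k] N) (x ⊗ₜ[k] y) (arrangeTail m' n θ).length
            (fun t =>
              (Fin.cases x v ((arrangeTail m' n θ).get t).1 : M) ⊗ₜ[k]
                (Fin.cases y w ((arrangeTail m' n θ).get t).2 : N)))
    (mI : k →ₗ[k] S.Q k)
    (hmI : mI 1 = S.gen k (1 : k) 0 (fun i => i.elim0))
    -- the data of the would-be enriched category
    (Obj : Type u) (Hom : Obj → Obj → Type u)
    [∀ A B, AddCommMonoid (Hom A B)] [∀ A B, Module k (Hom A B)]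
    (ids : ∀ A, Hom A A)
    (m : ∀ A B C : Obj, (Hom B C ⊗[k] S.Q (Hom A B)) →ₗ[k] Hom A C) :
    -- the three axioms of a `kMod^Q`-enriched category …
    ((∀ (A B : Obj) (g : Hom A B),
        m A A B (g ⊗ₜ[k]
          Qmap (LinearMap.toSpanSingleton k (Hom A A) (ids A)) (mI 1)) = g) ∧
      (∀ (A B : Obj) (q : S.Q (Hom A B)),
        m A B B ((ids B) ⊗ₜ[k] q) = εQ (Hom A B) q) ∧
      (∀ (A B C D : Obj) (h : Hom C D) (qg : S.Q (Hom B C))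
          (qf : S.Q (Hom A B)),
        m A B D ((m B C D (h ⊗ₜ[k] qg)) ⊗ₜ[k] qf) =
          m A C D (h ⊗ₜ[k]
            Qmap (m A B C)
              (mT (Hom B C) (S.Q (Hom A B)) (qg ⊗ₜ[k] δQ (Hom A B) qf)))))
    ↔
    -- … hold iff the induced operations `g⁽ⁿ⁾` satisfy (ii), (iii), (iv):
    ((∀ (A B : Obj) (g : Hom A B),
        opOf S Hom m g 0 (fun _ => ids A) = g) ∧
      ((∀ (A B : Obj) (f : Fin 1 → Hom A B),
          opOf S Hom m (ids B) 0 f = f 0) ∧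
        (∀ (A B : Obj) (f : Fin 2 → Hom A B),
          opOf S Hom m (ids B) 1 f = f 1) ∧
        (∀ (A B : Obj) (n : ℕ) (f : Fin (n + 3) → Hom A B),
          opOf S Hom m (ids B) (n + 2) f = 0)) ∧
      (∀ (A B C D : Obj) (m' n : ℕ) (h : Hom C D)
          (g : Fin (m' + 1) → Hom B C) (f : Fin (n + 1) → Hom A B),
        opOf S Hom m (opOf S Hom m h m' g) n f =
          ∑ P ∈ partitions n,
            ∑ θ ∈ partialInjs m' P.toList.length,
              opOf S Hom m h (arrangeTail m' P.toList.length θ).length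
                (Fin.cases (opIdx S Hom m (g 0) f ∅)
                  (fun t =>
                    opIdx S Hom m
                      (g ((arrangeTail m' P.toList.length θ).get t).1) f
                      (Fin.cases ∅ (fun j => P.toList.get j)
                        ((arrangeTail m' P.toList.length θ).get t).2))))) := by
  classical
  -- identification of the left-unit axiom terms
  have gen0 : ∀ (M : Type u) [AddCommMonoid M] [Module k M] (x : M)
      (v v' : Fin 0 → M), S.gen M x 0 v = S.gen M x 0 v' := by
    intro M _ _ x v v'
    exact congrArg (S.gen M x 0) (funext fun i => i.elim0)
  have e1 : ∀ (A B : Obj) (g : Hom A B),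
      m A A B (g ⊗ₜ[k]
        Qmap (LinearMap.toSpanSingleton k (Hom A A) (ids A)) (mI 1)) =
      opOf S Hom m g 0 (fun _ => ids A) := by
    intro A B g
    rw [hmI, hQmap]
    have hx : (LinearMap.toSpanSingleton k (Hom A A) (ids A)) (1 : k) = ids A := by
      simp
    rw [hx]
    exact congrArg (fun z => m A A B (g ⊗ₜ[k] z)) (gen0 _ _ _ _)
  have i1 : (∀ (A B : Obj) (g : Hom A B),
      m A A B (g ⊗ₜ[k]
        Qmap (LinearMap.toSpanSingleton k (Hom A A) (ids A)) (mI 1)) = g) ↔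
      (∀ (A B : Obj) (g : Hom A B),
        opOf S Hom m g 0 (fun _ => ids A) = g) := by
    constructor <;> intro H A B g
    · rw [← e1 A B g]; exact H A B g
    · rw [e1 A B g]; exact H A B g
  -- the key associativity computation on generators
  have key : ∀ (A B C D : Obj) (h : Hom C D) (m' n : ℕ)
      (y : Hom B C) (w : Fin m' → Hom B C) (x : Hom A B) (v : Fin n → Hom A B),
      m A C D (h ⊗ₜ[k]
        Qmap (m A B C) (mT (Hom B C) (S.Q (Hom A B))
          (S.gen (Hom B C) y m' w ⊗ₜ[k] δQ (Hom A B) (S.gen (Hom A B) x n v)))) =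
      ∑ P ∈ partitions n,
        ∑ θ ∈ partialInjs m' P.toList.length,
          opOf S Hom m h (arrangeTail m' P.toList.length θ).length
            (Fin.cases (opIdx S Hom m ((Fin.cases y w : Fin (m' + 1) → Hom B C) 0)
                (Fin.cases x v) ∅)
              (fun t =>
                opIdx S Hom m
                  ((Fin.cases y w : Fin (m' + 1) → Hom B C)
                    ((arrangeTail m' P.toList.length θ).get t).1)
                  (Fin.cases x v)
                  (Fin.cases ∅ (fun j => P.toList.get j)
                    ((arrangeTail m' P.toList.length θ).get t).2))) := by
    intro A B C D h m' n y w x v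
    rw [hδ]
    simp only [tmul_sum, map_sum, hmT, hQmap]
    refine Finset.sum_congr rfl fun P _ => Finset.sum_congr rfl fun θ _ => ?_
    refine congrArg (fun z => m A C D (h ⊗ₜ[k] z)) ?_
    refine congrArg (S.gen (Hom A C) (m A B C (y ⊗ₜ[k] S.genPart x v ∅))
      (arrangeTail m' P.toList.length θ).length) ?_
    funext t
    show m A B C
        ((Fin.cases y w : Fin (m' + 1) → Hom B C)
            ((arrangeTail m' P.toList.length θ).get t).1 ⊗ₜ[k]
          (Fin.cases (S.genPart x v ∅) (fun j => S.genPart x v (P.toList.get j)) :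
              Fin (P.toList.length + 1) → S.Q (Hom A B))
            ((arrangeTail m' P.toList.length θ).get t).2) =
      opIdx S Hom m
        ((Fin.cases y w : Fin (m' + 1) → Hom B C)
          ((arrangeTail m' P.toList.length θ).get t).1)
        (Fin.cases x v)
        (Fin.cases ∅ (fun j => P.toList.get j)
          ((arrangeTail m' P.toList.length θ).get t).2)
    rcases Fin.eq_zero_or_eq_succ ((arrangeTail m' P.toList.length θ).get t).2 with
      h2 | ⟨j, h2⟩ <;> rw [h2]
    · rfl
    · rfl
  -- right-unit axiom ↔ (iii)
  have i2 : (∀ (A B : Obj) (q : S.Q (Hom A B)),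
      m A B B ((ids B) ⊗ₜ[k] q) = εQ (Hom A B) q) ↔
      ((∀ (A B : Obj) (f : Fin 1 → Hom A B),
          opOf S Hom m (ids B) 0 f = f 0) ∧
        (∀ (A B : Obj) (f : Fin 2 → Hom A B),
          opOf S Hom m (ids B) 1 f = f 1) ∧
        (∀ (A B : Obj) (n : ℕ) (f : Fin (n + 3) → Hom A B),
          opOf S Hom m (ids B) (n + 2) f = 0)) := by
    constructor
    · intro H
      refine ⟨fun A B f => ?_, fun A B f => ?_, fun A B n f => ?_⟩
      · exact (H A B (S.gen (Hom A B) (f 0) 0 fun i => f i.succ)).trans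
          (hε0 (Hom A B) (f 0) (fun i => f i.succ))
      · exact (H A B (S.gen (Hom A B) (f 0) 1 fun i => f i.succ)).trans
          (hε1 (Hom A B) (f 0) (fun i => f i.succ))
      · exact (H A B (S.gen (Hom A B) (f 0) (n + 2) fun i => f i.succ)).trans
          (hε2 (Hom A B) (f 0) n (fun i => f i.succ))
    · rintro ⟨H0, H1, H2⟩ A B q
      refine LinearMap.congr_fun (S.homExt hS
        ((m A B B).comp (TensorProduct.mk k (Hom B B) (S.Q (Hom A B)) (ids B)))
        (εQ (Hom A B)) (fun x n v => ?_)) q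
      match n with
      | 0 =>
        have h0 := H0 A B (Fin.cases x v)
        exact h0.trans (hε0 (Hom A B) x v).symm
      | 1 =>
        have h1 := H1 A B (Fin.cases x v)
        exact h1.trans (hε1 (Hom A B) x v).symm
      | (n + 2) =>
        have h2 := H2 A B n (Fin.cases x v)
        exact h2.trans (hε2 (Hom A B) x n v).symm
  -- associativity axiom ↔ (iv)
  have i3 : (∀ (A B C D : Obj) (h : Hom C D) (qg : S.Q (Hom B C))
        (qf : S.Q (Hom A B)),
        m A B D ((m B C D (h ⊗ₜ[k] qg)) ⊗ₜ[k] qf) =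
          m A C D (h ⊗ₜ[k]
            Qmap (m A B C)
              (mT (Hom B C) (S.Q (Hom A B)) (qg ⊗ₜ[k] δQ (Hom A B) qf)))) ↔
      (∀ (A B C D : Obj) (m' n : ℕ) (h : Hom C D)
          (g : Fin (m' + 1) → Hom B C) (f : Fin (n + 1) → Hom A B),
        opOf S Hom m (opOf S Hom m h m' g) n f =
          ∑ P ∈ partitions n,
            ∑ θ ∈ partialInjs m' P.toList.length,
              opOf S Hom m h (arrangeTail m' P.toList.length θ).length
                (Fin.cases (opIdx S Hom m (g 0) f ∅)
                  (fun t =>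
                    opIdx S Hom m
                      (g ((arrangeTail m' P.toList.length θ).get t).1) f
                      (Fin.cases ∅ (fun j => P.toList.get j)
                        ((arrangeTail m' P.toList.length θ).get t).2)))) := by
    constructor
    · intro H A B C D m' n h g f
      have hk := key A B C D h m' n (g 0) (fun i => g i.succ) (f 0) (fun i => f i.succ)
      rw [finCasesSelf g, finCasesSelf f] at hk
      exact (H A B C D h (S.gen (Hom B C) (g 0) m' fun i => g i.succ)
        (S.gen (Hom A B) (f 0) n fun i => f i.succ)).trans hk
    · intro H A B C D h qg qf
      refine LinearMap.congr_fun (S.homExt hS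
        ((m A B D).comp
          (TensorProduct.mk k (Hom B D) (S.Q (Hom A B)) (m B C D (h ⊗ₜ[k] qg))))
        (((m A C D).comp
            (TensorProduct.mk k (Hom C D) (S.Q (Hom A C)) h)).comp
          ((Qmap (m A B C)).comp
            (((mT (Hom B C) (S.Q (Hom A B))).comp
                (TensorProduct.mk k (S.Q (Hom B C)) (S.Q (S.Q (Hom A B))) qg)).comp
              (δQ (Hom A B)))))
        (fun x n v => ?_)) qf
      refine LinearMap.congr_fun (S.homExt hS
        ((m A B D).comp
          (((TensorProduct.mk k (Hom B D) (S.Q (Hom A B))).flip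
              (S.gen (Hom A B) x n v)).comp
            ((m B C D).comp
              (TensorProduct.mk k (Hom C D) (S.Q (Hom B C)) h))))
        (((m A C D).comp
            (TensorProduct.mk k (Hom C D) (S.Q (Hom A C)) h)).comp
          ((Qmap (m A B C)).comp
            ((mT (Hom B C) (S.Q (Hom A B))).comp
              ((TensorProduct.mk k (S.Q (Hom B C)) (S.Q (S.Q (Hom A B)))).flip
                (δQ (Hom A B) (S.gen (Hom A B) x n v))))))
        (fun y m' w => ?_)) qg
      have hH := H A B C D m' n h (Fin.cases y w) (Fin.cases x v)
      have hk := (key A B C D h m' n y w x v).symm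
      have hmid := hH.trans hk
      refine Eq.trans (Eq.trans ?_ hmid) ?_
      · rfl
      · rfl
  exact and_congr i1 (and_congr i2 i3)
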